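/- For a permutation σ of {1,...,n}, the rational function f_σ(u_1,...,u_n) = 1/(u_{σ(1)}(u_{σ(1)}+u_{σ(2)})···(u_{σ(1)}+···+u_{σ(n)})) satisfies: the product f_σ · f_τ (with τ a permutation of {1,...,m} whose variables are shifted to u_{n+1},...,u_{n+m}) equals the sum of f_ρ over all permutations ρ in the shuffle of σ and the shifted τ. -/

import Mathlib

open Finset

/-- The "permutational mould" `f_σ(u_1,…,u_n) = ∏_k 1/(u_{σ(1)}+⋯+u_{σ(k)})`. -/
noncomputable def mouldF {K : Type*} [Field K] {n : ℕ} (σ : Equiv.Perm (Fin n))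
    (u : Fin n → K) : K :=
  ∏ k : Fin n, (∑ j ∈ Finset.Iic k, u (σ j))⁻¹

/-- `ρ` is a shuffle of the word `σ(1)…σ(n)` and the word `τ(1)+n,…,τ(m)+n`:
the values `< n` appear in `ρ` in the relative order of the word of `σ`,
and the values `≥ n` in the relative order of the shifted word of `τ`. -/
def IsShuffleOf {n m : ℕ} (σ : Equiv.Perm (Fin n)) (τ : Equiv.Perm (Fin m))
    (ρ : Equiv.Perm (Fin (n + m))) : Prop :=
  (∀ i j : Fin n, i < j →
      ρ⁻¹ (Fin.castAdd m (σ i)) < ρ⁻¹ (Fin.castAdd m (σ j))) ∧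
  (∀ i j : Fin m, i < j →
      ρ⁻¹ (Fin.natAdd n (τ i)) < ρ⁻¹ (Fin.natAdd n (τ j)))

/-- Product formula for permutational moulds: `f_σ · f_τ(shifted)` is the sum of
`f_ρ` over all shuffles `ρ` of `σ` and the shifted `τ`, in the field of rational
functions in the variables `u_1,…,u_{n+m}`. -/
instance {n m : ℕ} (σ : Equiv.Perm (Fin n)) (τ : Equiv.Perm (Fin m)) :
    DecidablePred (IsShuffleOf σ τ) := fun ρ => by
  unfold IsShuffleOf; infer_instance

namespace MouldAux

open List

variable {α : Type*}

/-- All shuffles (interleavings) of two lists. -/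
def shuffles : List α → List α → List (List α)
  | [], b => [b]
  | a :: as, [] => [a :: as]
  | x :: as, y :: bs =>
      ((shuffles as (y :: bs)).map (x :: ·)) ++ ((shuffles (x :: as) bs).map (y :: ·))
  termination_by a b => a.length + b.length

theorem perm_of_mem_shuffles :
    ∀ (a b c : List α), c ∈ shuffles a b → c ~ a ++ b := by
  intro a b
  induction a, b using shuffles.induct with
  | case1 b => intro c hc; simp only [shuffles, List.mem_singleton] at hc; simp [hc]
  | case2 a as => intro c hc; simp only [shuffles, List.mem_singleton] at hc; simp [hc]
  | case3 x as y bs ih1 ih2 =>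
    intro c hc
    simp only [shuffles, List.mem_append, List.mem_map] at hc
    rcases hc with ⟨c', hc', rfl⟩ | ⟨c', hc', rfl⟩
    · exact ((ih1 c' hc').cons x)
    · exact ((ih2 c' hc').cons y).trans List.perm_middle.symm

theorem sublist_left_of_mem_shuffles :
    ∀ (a b c : List α), c ∈ shuffles a b → a <+ c := by
  intro a b
  induction a, b using shuffles.induct with
  | case1 b => intro c hc; simp only [shuffles, List.mem_singleton] at hc; simp [hc]
  | case2 a as => intro c hc; simp only [shuffles, List.mem_singleton] at hc; simp [hc]
  | case3 x as y bs ih1 ih2 =>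
    intro c hc
    simp only [shuffles, List.mem_append, List.mem_map] at hc
    rcases hc with ⟨c', hc', rfl⟩ | ⟨c', hc', rfl⟩
    · exact (ih1 c' hc').cons₂ x
    · exact (ih2 c' hc').cons y

theorem sublist_right_of_mem_shuffles :
    ∀ (a b c : List α), c ∈ shuffles a b → b <+ c := by
  intro a b
  induction a, b using shuffles.induct with
  | case1 b => intro c hc; simp only [shuffles, List.mem_singleton] at hc; simp [hc]
  | case2 a as => intro c hc; simp only [shuffles, List.mem_singleton] at hc; simp [hc]
  | case3 x as y bs ih1 ih2 =>
    intro c hc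
    simp only [shuffles, List.mem_append, List.mem_map] at hc
    rcases hc with ⟨c', hc', rfl⟩ | ⟨c', hc', rfl⟩
    · exact (ih1 c' hc').cons x
    · exact (ih2 c' hc').cons₂ y

theorem nodup_shuffles : ∀ (a b : List α), (∀ x ∈ a, x ∉ b) →
    (shuffles a b).Nodup := by
  intro a b
  induction a, b using shuffles.induct with
  | case1 b => intro _; simp [shuffles]
  | case2 a as => intro _; simp [shuffles]
  | case3 x as y bs ih1 ih2 =>
    intro hd
    rw [shuffles]
    refine List.Nodup.append ?_ ?_ ?_
    · exact (ih1 (fun z hz => hd z (mem_cons_of_mem _ hz))).map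
        (fun l₁ l₂ h => by injection h)
    · exact (ih2 (fun z hz hz' => hd z hz (mem_cons_of_mem _ hz'))).map
        (fun l₁ l₂ h => by injection h)
    · intro l hl1 hl2
      simp only [List.mem_map] at hl1 hl2
      obtain ⟨c1, -, rfl⟩ := hl1
      obtain ⟨c2, -, h⟩ := hl2
      have hxy : x ≠ y := by
        intro h'; subst h'
        exact hd x List.mem_cons_self List.mem_cons_self
      injection h with h1 _
      exact hxy h1.symm

theorem mem_shuffles_of {c : List α} :
    ∀ {a b : List α}, (∀ x ∈ a, x ∉ b) → c.Nodup → c ~ a ++ b → a <+ c → b <+ c →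
      c ∈ shuffles a b := by
  induction c with
  | nil =>
    intro a b _ _ hp _ _
    obtain ⟨rfl, rfl⟩ := List.append_eq_nil_iff.mp hp.symm.eq_nil
    simp [shuffles]
  | cons x c' ih =>
    intro a b hd nc hp ha hb
    match a, b with
    | [], b =>
      have : b = x :: c' := hb.eq_of_length (by simpa using hp.length_eq.symm)
      simp [shuffles, this]
    | a0 :: a', [] =>
      have : a0 :: a' = x :: c' := ha.eq_of_length (by simpa using hp.length_eq.symm)
      simp [shuffles, this]
    | a0 :: a', b0 :: b' =>
      have hxc' : x ∉ c' := (List.nodup_cons.mp nc).1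
      have nc' : c'.Nodup := (List.nodup_cons.mp nc).2
      have hx : x ∈ a0 :: a' ∨ x ∈ b0 :: b' :=
        List.mem_append.mp (hp.subset List.mem_cons_self)
      rcases hx with hxa | hxb
      · have hx0 : x = a0 := by
          by_contra hne
          have ha' : a0 :: a' <+ c' := by
            cases ha with
            | cons _ h => exact h
            | cons_cons _ h => exact absurd rfl hne
          exact hxc' (ha'.subset hxa)
        subst hx0
        have hp' : c' ~ a' ++ (b0 :: b') := (List.perm_cons x).mp hp
        have ha2 : a' <+ c' := List.cons_sublist_cons.mp ha
        have hb2 : b0 :: b' <+ c' := by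
          cases hb with
          | cons _ h => exact h
          | cons_cons _ h => exact absurd hxa (fun hm => hd x hm List.mem_cons_self)
        have hmem := ih (fun z hz hz' => hd z (mem_cons_of_mem _ hz) hz') nc' hp' ha2 hb2
        rw [shuffles]
        exact List.mem_append.mpr (Or.inl (List.mem_map.mpr ⟨c', hmem, rfl⟩))
      · have hx0 : x = b0 := by
          by_contra hne
          have hb' : b0 :: b' <+ c' := by
            cases hb with
            | cons _ h => exact h
            | cons_cons _ h => exact absurd rfl hne
          exact hxc' (hb'.subset hxb)
        subst hx0
        have hp' : c' ~ (a0 :: a') ++ b' := by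
          have : x :: c' ~ x :: ((a0 :: a') ++ b') :=
            hp.trans (List.perm_middle (a := x) (l₁ := a0 :: a') (l₂ := b'))
          exact (List.perm_cons x).mp this
        have hb2 : b' <+ c' := List.cons_sublist_cons.mp hb
        have ha2 : a0 :: a' <+ c' := by
          cases ha with
          | cons _ h => exact h
          | cons_cons _ h => exact absurd hxb (hd x List.mem_cons_self)
        have hmem := ih (fun z hz hz' => hd z hz (mem_cons_of_mem _ hz')) nc' hp' ha2 hb2
        rw [shuffles]
        exact List.mem_append.mpr (Or.inr (List.mem_map.mpr ⟨c', hmem, rfl⟩))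

/-- `G u l = ∏` over nonempty suffixes `s` of `l` of `(∑ x ∈ s, u x)⁻¹`. -/
def G {K : Type*} [Field K] (u : α → K) : List α → K
  | [] => 1
  | x :: l => (((x :: l).map u).sum)⁻¹ * G u l

theorem G_mul_G {K : Type*} [Field K] (u : α → K) :
    ∀ (a b : List α), (∀ l : List α, l ≠ [] → l <+~ a ++ b → (l.map u).sum ≠ 0) →
    G u a * G u b = ((shuffles a b).map (G u)).sum := by
  intro a b
  induction a, b using shuffles.induct with
  | case1 b => intro _; simp [shuffles, G]
  | case2 a as => intro _; simp [shuffles, G]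
  | case3 x as y bs ih1 ih2 =>
    intro H
    set A := ((x :: as).map u).sum with hA
    set B := ((y :: bs).map u).sum with hB
    have HA : A ≠ 0 := H _ (by simp) (List.sublist_append_left _ _).subperm
    have HB : B ≠ 0 := H _ (by simp) (List.sublist_append_right _ _).subperm
    have HS : A + B ≠ 0 := by
      intro h
      exact (H ((x :: as) ++ (y :: bs)) (by simp) (List.Subperm.refl _))
        (by rw [List.map_append, List.sum_append, ← hA, ← hB]; exact h)
    have ih1' := ih1 (fun l hl hs => H l hl
      (hs.trans (List.sublist_cons_self x (as ++ (y :: bs))).subperm))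
    have ih2' := ih2 (fun l hl hs => H l hl
      (hs.trans ((List.sublist_cons_self y bs).append_left (x :: as)).subperm))
    rw [shuffles, List.map_append, List.sum_append, List.map_map, List.map_map]
    have e1 : ((shuffles as (y :: bs)).map (G u ∘ (x :: ·)))
        = (shuffles as (y :: bs)).map (fun c => (A + B)⁻¹ * G u c) := by
      apply List.map_congr_left
      intro c hc
      have hperm : (c.map u).sum = ((as ++ (y :: bs)).map u).sum :=
        ((perm_of_mem_shuffles _ _ c hc).map u).sum_eq
      show G u (x :: c) = _
      rw [G]
      have : ((x :: c).map u).sum = A + B := by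
        rw [hA, hB]
        simp only [List.map_cons, List.sum_cons, List.map_append, List.sum_append, hperm]
        ring
      rw [this]
    have e2 : ((shuffles (x :: as) bs).map (G u ∘ (y :: ·)))
        = (shuffles (x :: as) bs).map (fun c => (A + B)⁻¹ * G u c) := by
      apply List.map_congr_left
      intro c hc
      have hperm : (c.map u).sum = (((x :: as) ++ bs).map u).sum :=
        ((perm_of_mem_shuffles _ _ c hc).map u).sum_eq
      show G u (y :: c) = _
      rw [G]
      have : ((y :: c).map u).sum = A + B := by
        rw [hA, hB]
        simp only [List.map_cons, List.sum_cons, List.map_append, List.sum_append, hperm]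
        ring
      rw [this]
    rw [e1, e2, List.sum_map_mul_left, List.sum_map_mul_left, ← ih1', ← ih2']
    have gx : G u (x :: as) = A⁻¹ * G u as := rfl
    have gy : G u (y :: bs) = B⁻¹ * G u bs := rfl
    rw [gx, gy]
    field_simp

theorem sum_Iic_castSucc {M : Type*} [AddCommMonoid M] {N : ℕ} (g : Fin (N + 1) → M)
    (k : Fin N) :
    ∑ j ∈ Finset.Iic (Fin.castSucc k), g j = ∑ j ∈ Finset.Iic k, g (Fin.castSucc j) := by
  have h : Finset.Iic (Fin.castSucc k)
      = (Finset.Iic k).map ⟨Fin.castSucc, Fin.castSucc_injective N⟩ := by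
    ext j
    simp only [Finset.mem_Iic, Finset.mem_map, Function.Embedding.coeFn_mk]
    constructor
    · intro hj
      have hjk : (j : ℕ) ≤ (k : ℕ) := hj
      refine ⟨⟨(j : ℕ), lt_of_le_of_lt hjk k.isLt⟩, hjk, ?_⟩
      ext; simp
    · rintro ⟨i, hi, rfl⟩
      exact Fin.castSucc_le_castSucc_iff.mpr hi
  rw [h, Finset.sum_map]
  rfl

theorem G_word {K : Type*} [Field K] {N : ℕ} (u : α → K) (p : Fin N → α) :
    G u (((List.finRange N).map p).reverse)
      = ∏ k : Fin N, (∑ j ∈ Finset.Iic k, u (p j))⁻¹ := by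
  induction N with
  | zero => simp [G]
  | succ N ih =>
    rw [List.finRange_succ_last, List.map_append, List.reverse_append]
    simp only [List.map_map, List.map_cons, List.map_nil, List.reverse_cons,
      List.reverse_nil, List.nil_append, List.singleton_append]
    rw [G, ih (p ∘ Fin.castSucc), Fin.prod_univ_castSucc]
    have h1 : ((p (Fin.last N) :: ((List.finRange N).map (p ∘ Fin.castSucc)).reverse).map u).sum
        = ∑ j ∈ Finset.Iic (Fin.last N), u (p j) := by
      rw [List.map_cons, List.sum_cons]
      have : Finset.Iic (Fin.last N) = Finset.univ := by
        ext j; simp [Fin.le_last]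
      rw [this, Fin.sum_univ_castSucc (f := fun j => u (p j))]
      rw [List.map_reverse, List.sum_reverse, List.map_map, ← Fin.sum_univ_def]
      simp [Function.comp_def, add_comm]
    have h2 : ∀ k : Fin N, (∑ j ∈ Finset.Iic (Fin.castSucc k), u (p j))⁻¹
        = (∑ j ∈ Finset.Iic k, u ((p ∘ Fin.castSucc) j))⁻¹ := by
      intro k; rw [sum_Iic_castSucc (fun j => u (p j)) k]; rfl
    rw [h1]
    simp only [h2]
    ring

theorem sublist_map_finRange_iff {N : ℕ} (ρ : Equiv.Perm (Fin N)) (l : List (Fin N)) :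
    l <+ (List.finRange N).map ρ ↔ (l.map ρ.symm).Pairwise (· < ·) := by
  constructor
  · intro h
    have h2 : l.map ρ.symm <+ List.finRange N := by
      have := h.map ρ.symm
      simpa [List.map_map, Function.comp_def] using this
    exact (List.pairwise_lt_finRange N).sublist h2
  · intro h
    have hnd : (l.map ρ.symm).Nodup := h.imp (fun hlt => ne_of_lt hlt)
    have h2 : l.map ρ.symm <+ List.finRange N :=
      List.sublist_of_subperm_of_pairwise
        (List.subperm_of_subset hnd (fun z _ => List.mem_finRange z)) h
        (List.pairwise_lt_finRange N)
    have := h2.map ρ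
    simpa [List.map_map, Function.comp_def] using this

theorem pairwise_map_finRange_iff {β : Type*} {n : ℕ} {f : Fin n → β} {R : β → β → Prop} :
    ((List.finRange n).map f).Pairwise R ↔ ∀ i j : Fin n, i < j → R (f i) (f j) := by
  rw [List.pairwise_map, List.pairwise_iff_getElem]
  simp only [List.length_finRange, List.getElem_finRange]
  constructor
  · intro h i j hij
    have := h i j i.isLt j.isLt hij
    simpa [Fin.cast, Fin.ext_iff] using this
  · intro h i j hi hj hij
    exact h ⟨i, by simpa using hi⟩ ⟨j, by simpa using hj⟩ (by simpa using hij)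

/-- The permutation whose word (read in positions `0,…,N-1`) is `c.reverse`. -/
noncomputable def permOfList {N : ℕ} (c : List (Fin N)) (hlen : c.length = N)
    (nd : c.Nodup) (hmem : ∀ x, x ∈ c) : Equiv.Perm (Fin N) :=
  (finCongr (by simp [hlen] : N = c.reverse.length)).trans
    (List.Nodup.getEquivOfForallMemList c.reverse (List.nodup_reverse.mpr nd)
      (fun x => List.mem_reverse.mpr (hmem x)))

theorem word_permOfList {N : ℕ} (c : List (Fin N)) (hlen : c.length = N)
    (nd : c.Nodup) (hmem : ∀ x, x ∈ c) :
    (List.finRange N).map (permOfList c hlen nd hmem) = c.reverse := by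
  apply List.ext_getElem
  · simp [hlen]
  · intro k hk hk'
    simp [permOfList, List.Nodup.getEquivOfForallMemList_apply, finCongr, Fin.cast,
      List.get_eq_getElem]

theorem perm_eq_of_word_eq {N : ℕ} {ρ₁ ρ₂ : Equiv.Perm (Fin N)}
    (h : (List.finRange N).map ρ₁ = (List.finRange N).map ρ₂) : ρ₁ = ρ₂ := by
  apply Equiv.ext
  intro x
  have hx1 : (x : ℕ) < ((List.finRange N).map ρ₁).length := by simpa using x.isLt
  have h2 := List.get_of_eq h ⟨(x : ℕ), hx1⟩
  simpa using h2

end MouldAux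

open MouldAux List in
theorem mould_aux {n m : ℕ} (σ : Equiv.Perm (Fin n)) (τ : Equiv.Perm (Fin m))
    {K : Type*} [Field K] (u : Fin (n + m) → K)
    (hu : ∀ l : List (Fin (n + m)), l ≠ [] → l.Nodup → (l.map u).sum ≠ 0) :
    mouldF σ (fun i => u (Fin.castAdd m i)) * mouldF τ (fun i => u (Fin.natAdd n i)) =
      ∑ ρ ∈ Finset.univ.filter (fun ρ : Equiv.Perm (Fin (n + m)) => IsShuffleOf σ τ ρ),
        mouldF ρ u := by
  classical
  set wa : List (Fin (n + m)) := (List.finRange n).map (fun i => Fin.castAdd m (σ i)) with hwa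
  set wb : List (Fin (n + m)) := (List.finRange m).map (fun i => Fin.natAdd n (τ i)) with hwb
  have nwa : wa.Nodup := (List.nodup_finRange n).map
    (fun i j h => σ.injective (Fin.castAdd_injective _ _ h))
  have nwb : wb.Nodup := (List.nodup_finRange m).map
    (fun i j h => τ.injective (by
      have : (Fin.natAdd n (τ i) : ℕ) = (Fin.natAdd n (τ j) : ℕ) := congrArg Fin.val h
      simp only [Fin.coe_natAdd] at this
      exact Fin.ext (by omega)))
  have hd : ∀ x ∈ wa.reverse, x ∉ wb.reverse := by
    intro x hx hx'
    rw [List.mem_reverse, hwa, List.mem_map] at hx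
    rw [List.mem_reverse, hwb, List.mem_map] at hx'
    obtain ⟨i, -, rfl⟩ := hx
    obtain ⟨j, -, hj⟩ := hx'
    have := congrArg Fin.val hj
    simp only [Fin.coe_natAdd, Fin.coe_castAdd] at this
    have := (σ i).isLt
    omega
  have na : wa.reverse.Nodup := List.nodup_reverse.mpr nwa
  have nb : wb.reverse.Nodup := List.nodup_reverse.mpr nwb
  have nab : (wa.reverse ++ wb.reverse).Nodup := List.Nodup.append na nb hd
  have hfull : ∀ x : Fin (n + m), x ∈ wa.reverse ++ wb.reverse := by
    intro x
    rw [List.mem_append, List.mem_reverse, List.mem_reverse]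
    induction x using Fin.addCases with
    | left i => exact Or.inl (by rw [hwa, List.mem_map]; exact ⟨σ.symm i, List.mem_finRange _, by simp⟩)
    | right i => exact Or.inr (by rw [hwb, List.mem_map]; exact ⟨τ.symm i, List.mem_finRange _, by simp⟩)
  -- the shuffle characterization
  have key : ∀ ρ : Equiv.Perm (Fin (n + m)),
      IsShuffleOf σ τ ρ ↔
        ((List.finRange (n + m)).map ρ).reverse ∈ shuffles wa.reverse wb.reverse := by
    intro ρ
    have c1 : wa.reverse <+ ((List.finRange (n + m)).map ρ).reverse ↔
        ∀ i j : Fin n, i < j →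
          ρ.symm (Fin.castAdd m (σ i)) < ρ.symm (Fin.castAdd m (σ j)) := by
      rw [List.reverse_sublist, sublist_map_finRange_iff, hwa, List.map_map]
      exact pairwise_map_finRange_iff
    have c2 : wb.reverse <+ ((List.finRange (n + m)).map ρ).reverse ↔
        ∀ i j : Fin m, i < j →
          ρ.symm (Fin.natAdd n (τ i)) < ρ.symm (Fin.natAdd n (τ j)) := by
      rw [List.reverse_sublist, sublist_map_finRange_iff, hwb, List.map_map]
      exact pairwise_map_finRange_iff
    have hcnodup : ((List.finRange (n + m)).map ρ).reverse.Nodup :=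
      List.nodup_reverse.mpr ((List.nodup_finRange _).map ρ.injective)
    have hcperm : ((List.finRange (n + m)).map ρ).reverse ~ wa.reverse ++ wb.reverse := by
      rw [List.perm_ext_iff_of_nodup hcnodup nab]
      intro x
      constructor
      · intro _; exact hfull x
      · intro _
        rw [List.mem_reverse, List.mem_map]
        exact ⟨ρ.symm x, List.mem_finRange _, by simp⟩
    constructor
    · intro h
      refine mem_shuffles_of hd hcnodup hcperm (c1.mpr ?_) (c2.mpr ?_)
      · intro i j hij
        have := h.1 i j hij
        rwa [Equiv.Perm.inv_def] at this
      · intro i j hij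
        have := h.2 i j hij
        rwa [Equiv.Perm.inv_def] at this
    · intro h
      constructor
      · intro i j hij
        rw [Equiv.Perm.inv_def]
        exact c1.mp (sublist_left_of_mem_shuffles _ _ _ h) i j hij
      · intro i j hij
        rw [Equiv.Perm.inv_def]
        exact c2.mp (sublist_right_of_mem_shuffles _ _ _ h) i j hij
  -- nonvanishing hypothesis for `G_mul_G`
  have H : ∀ l : List (Fin (n + m)), l ≠ [] → l <+~ wa.reverse ++ wb.reverse →
      (l.map u).sum ≠ 0 := by
    intro l hl hsub
    refine hu l hl ?_
    obtain ⟨l', hlp, hls⟩ := hsub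
    exact hlp.nodup_iff.mp (hls.nodup nab)
  have main := G_mul_G u wa.reverse wb.reverse H
  -- identify the left factors
  have gla : G u wa.reverse = mouldF σ (fun i => u (Fin.castAdd m i)) := by
    rw [hwa]
    rw [G_word u (fun i => Fin.castAdd m (σ i))]
    rfl
  have glb : G u wb.reverse = mouldF τ (fun i => u (Fin.natAdd n i)) := by
    rw [hwb]
    rw [G_word u (fun i => Fin.natAdd n (τ i))]
    rfl
  rw [← gla, ← glb, main]
  -- convert the list sum to a `Finset` sum and use the bijection
  refine ((List.sum_toFinset _ (nodup_shuffles wa.reverse wb.reverse hd)).symm).trans ?_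
  -- data for the bijection
  have clen : ∀ c ∈ (shuffles wa.reverse wb.reverse).toFinset, c.length = n + m := by
    intro c hc
    have := (perm_of_mem_shuffles _ _ c (List.mem_toFinset.mp hc)).length_eq
    simpa [hwa, hwb] using this
  have cnd : ∀ c ∈ (shuffles wa.reverse wb.reverse).toFinset, c.Nodup := by
    intro c hc
    exact (perm_of_mem_shuffles _ _ c (List.mem_toFinset.mp hc)).nodup_iff.mpr nab
  have cmem : ∀ c ∈ (shuffles wa.reverse wb.reverse).toFinset, ∀ x, x ∈ c := by
    intro c hc x
    exact (perm_of_mem_shuffles _ _ c (List.mem_toFinset.mp hc)).mem_iff.mpr (hfull x)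
  refine Finset.sum_bij' (i := fun c hc => permOfList c (clen c hc) (cnd c hc) (cmem c hc))
    (j := fun ρ _ => ((List.finRange (n + m)).map ρ).reverse) ?_ ?_ ?_ ?_ ?_
  · intro c hc
    rw [Finset.mem_filter]
    refine ⟨Finset.mem_univ _, ?_⟩
    rw [key, word_permOfList, List.reverse_reverse]
    exact List.mem_toFinset.mp hc
  · intro ρ hρ
    rw [List.mem_toFinset]
    exact (key ρ).mp (Finset.mem_filter.mp hρ).2
  · intro c hc
    beta_reduce
    rw [word_permOfList, List.reverse_reverse]
  · intro ρ hρ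
    beta_reduce
    apply perm_eq_of_word_eq
    rw [word_permOfList, List.reverse_reverse]
  · intro c hc
    have : mouldF (permOfList c (clen c hc) (cnd c hc) (cmem c hc)) u
        = G u (((List.finRange (n + m)).map
            (permOfList c (clen c hc) (cnd c hc) (cmem c hc))).reverse) := by
      rw [G_word u]; rfl
    rw [this, word_permOfList, List.reverse_reverse]

set_option maxHeartbeats 1000000 in
theorem mould_product_shuffle (n m : ℕ) (σ : Equiv.Perm (Fin n)) (τ : Equiv.Perm (Fin m)) :
    letI F := FractionRing (MvPolynomial (Fin (n + m)) ℚ)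
    letI u : Fin (n + m) → F :=
      fun i => algebraMap (MvPolynomial (Fin (n + m)) ℚ) F (MvPolynomial.X i)
    mouldF σ (fun i => u (Fin.castAdd m i)) * mouldF τ (fun i => u (Fin.natAdd n i)) =
      ∑ ρ ∈ Finset.univ.filter (fun ρ : Equiv.Perm (Fin (n + m)) => IsShuffleOf σ τ ρ),
        mouldF ρ u := by
  refine mould_aux (K := FractionRing (MvPolynomial (Fin (n + m)) ℚ)) σ τ
    (fun i => algebraMap _ _ (MvPolynomial.X i)) ?_
  intro l hl hnd
  classical
  have hX : ∀ s : Finset (Fin (n + m)), s.Nonempty →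
      (∑ i ∈ s, MvPolynomial.X i : MvPolynomial (Fin (n + m)) ℚ) ≠ 0 := by
    intro s hs h0
    obtain ⟨i, hi⟩ := hs
    have := congrArg (MvPolynomial.coeff (Finsupp.single i 1)) h0
    rw [MvPolynomial.coeff_sum] at this
    simp only [MvPolynomial.coeff_X', MvPolynomial.coeff_zero] at this
    rw [Finset.sum_eq_single i] at this
    · simp at this
    · intro j _ hji
      rw [if_neg]
      intro h
      exact hji (by
        have := Finsupp.single_left_injective (one_ne_zero) h
        exact this)
    · intro h; exact absurd hi h
  have : (l.map (fun i => algebraMap (MvPolynomial (Fin (n + m)) ℚ)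
      (FractionRing (MvPolynomial (Fin (n + m)) ℚ)) (MvPolynomial.X i))).sum
      = algebraMap _ _ ((l.map (fun i => (MvPolynomial.X i : MvPolynomial (Fin (n + m)) ℚ))).sum) := by
    rw [map_list_sum, List.map_map]
    rfl
  rw [this]
  intro h0
  have hinj := IsFractionRing.injective (MvPolynomial (Fin (n + m)) ℚ)
    (FractionRing (MvPolynomial (Fin (n + m)) ℚ))
  have hz : (l.map (fun i => (MvPolynomial.X i : MvPolynomial (Fin (n + m)) ℚ))).sum = 0 := by
    apply hinj
    rw [h0, map_zero]
  rw [← List.sum_toFinset _ hnd] at hz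
  exact hX l.toFinset (by
    cases l with
    | nil => exact absurd rfl hl
    | cons x l => exact ⟨x, by simp⟩) hz
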